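/- Let (X,d) be a compact metric space with diam(X) < D, let ε > 0, and let α, β be fully supported Borel probability measures on X each satisfying the Λ-doubling condition for some Λ > 0. Then for all x, x' ∈ X, |d_α^{(ε)}(x,x') − d_β^{(ε)}(x,x')| ≤ 2(1+2ε) · Φ_{Λ,D,ε}(√(d_{W,1}(α,β))). -/

import Mathlib

open MeasureTheory Metric Set Filter

/-- The ℓ¹-Wasserstein distance: infimum over couplings of the expected distance. -/
noncomputable def wassersteinDist {X : Type*} [MeasurableSpace X] [PseudoMetricSpace X]
    (α β : Measure X) : ℝ :=
  sInf ((fun μ : Measure (X × X) => ∫ p, dist p.1 p.2 ∂μ) ''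
    {μ : Measure (X × X) | μ.map Prod.fst = α ∧ μ.map Prod.snd = β})

/-- The (one-sided) Prokhorov distance between Borel probability measures. -/
noncomputable def prokhorovDist {X : Type*} [MeasurableSpace X] [PseudoMetricSpace X]
    (α β : Measure X) : ℝ :=
  sInf {δ : ℝ | 0 < δ ∧ ∀ A : Set X, α A ≤ β (thickening δ A) + ENNReal.ofReal δ}

/-- ε-local truncation of α at x: restrict to the closed ε-ball and renormalize. -/
noncomputable def localTrunc {X : Type*} [MeasurableSpace X] [PseudoMetricSpace X]
    (α : Measure X) (ε : ℝ) (x : X) : Measure X :=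
  (α (closedBall x ε))⁻¹ • α.restrict (closedBall x ε)

/-- The support of a measure: points all of whose neighborhoods have positive measure. -/
def msupport {X : Type*} [TopologicalSpace X] [MeasurableSpace X] (μ : Measure X) : Set X :=
  {x : X | ∀ U ∈ nhds x, 0 < μ U}

/-- The Λ-doubling condition for a Borel measure: for points in the support,
`α (closedBall x r₁) / α (closedBall x r₂) ≤ (r₁/r₂)^Λ` whenever `r₁ ≥ r₂ > 0`. -/
def DoublingCond {X : Type*} [MeasurableSpace X] [PseudoMetricSpace X]
    (α : Measure X) (Λ : ℝ) : Prop :=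
  ∀ x ∈ msupport α, ∀ r₁ r₂ : ℝ, r₂ ≤ r₁ → 0 < r₂ →
    α (closedBall x r₁) / α (closedBall x r₂) ≤ ENNReal.ofReal ((r₁ / r₂) ^ Λ)

/-- `ψ_{Λ,D}(r) = min(1, (r/D)^Λ)`. -/
noncomputable def psiLD (Λ D r : ℝ) : ℝ := min 1 ((r / D) ^ Λ)

/-- `Φ_{Λ,D,ε}(η) = η/ψ_{Λ,D}(ε) + ((1+η/ε)^Λ − 1)`. -/
noncomputable def PhiLDE (Λ D ε η : ℝ) : ℝ := η / psiLD Λ D ε + ((1 + η / ε) ^ Λ - 1)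

set_option linter.unusedSectionVars false
set_option linter.unusedVariables false
set_option maxHeartbeats 1000000

open ProbabilityTheory

section Basics

variable {X : Type*} [MetricSpace X] [CompactSpace X] [MeasurableSpace X] [BorelSpace X]

lemma dist_le_diam_univ' (p q : X) : dist p q ≤ Metric.diam (Set.univ : Set X) :=
  Metric.dist_le_diam_of_mem isCompact_univ.isBounded trivial trivial

lemma integrable_dist_comp {Y : Type*} [MeasurableSpace Y] (μ : Measure Y) [IsFiniteMeasure μ]
    {f g : Y → X} (hf : Measurable f) (hg : Measurable g) :
    Integrable (fun y => dist (f y) (g y)) μ := by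
  refine Integrable.mono' (integrable_const (Metric.diam (Set.univ : Set X)))
    (hf.dist hg).aestronglyMeasurable (ae_of_all _ fun y => ?_)
  rw [Real.norm_eq_abs, abs_of_nonneg dist_nonneg]
  exact dist_le_diam_univ' _ _

lemma integrable_dist_fn (μ : Measure (X × X)) [IsFiniteMeasure μ] :
    Integrable (fun p : X × X => dist p.1 p.2) μ :=
  integrable_dist_comp μ measurable_fst measurable_snd

lemma coupling_univ {α β : Measure X} [IsProbabilityMeasure α] {μ : Measure (X × X)}
    (h : μ.map Prod.fst = α) : μ Set.univ = 1 := by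
  have h2 := congrArg (fun ν : Measure X => ν Set.univ) h
  simp only [Measure.map_apply measurable_fst MeasurableSet.univ, Set.preimage_univ] at h2
  simpa using h2

lemma coupling_prob {α β : Measure X} [IsProbabilityMeasure α] {μ : Measure (X × X)}
    (h : μ.map Prod.fst = α) : IsProbabilityMeasure μ :=
  ⟨coupling_univ (β := β) h⟩

lemma cost_nonneg (μ : Measure (X × X)) : 0 ≤ ∫ p, dist p.1 p.2 ∂μ :=
  integral_nonneg fun _ => dist_nonneg

lemma couplings_bddBelow (α β : Measure X) :
    BddBelow ((fun μ : Measure (X × X) => ∫ p, dist p.1 p.2 ∂μ) ''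
      {μ : Measure (X × X) | μ.map Prod.fst = α ∧ μ.map Prod.snd = β}) := by
  refine ⟨0, ?_⟩
  rintro t ⟨μ, -, rfl⟩
  exact cost_nonneg μ

lemma couplings_nonempty (α β : Measure X) [IsProbabilityMeasure α] [IsProbabilityMeasure β] :
    ((fun μ : Measure (X × X) => ∫ p, dist p.1 p.2 ∂μ) ''
      {μ : Measure (X × X) | μ.map Prod.fst = α ∧ μ.map Prod.snd = β}).Nonempty := by
  refine ⟨_, ⟨α.prod β, ⟨?_, ?_⟩, rfl⟩⟩
  · exact Measure.fst_prod
  · exact Measure.snd_prod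

lemma wd_nonneg (α β : Measure X) : 0 ≤ wassersteinDist α β := by
  apply Real.sInf_nonneg
  rintro t ⟨μ, -, rfl⟩
  exact cost_nonneg μ

lemma wd_le_cost {α β : Measure X} (μ : Measure (X × X))
    (h1 : μ.map Prod.fst = α) (h2 : μ.map Prod.snd = β) :
    wassersteinDist α β ≤ ∫ p, dist p.1 p.2 ∂μ :=
  csInf_le (couplings_bddBelow α β) ⟨μ, ⟨h1, h2⟩, rfl⟩

lemma exists_coupling_cost_lt (α β : Measure X) [IsProbabilityMeasure α] [IsProbabilityMeasure β]
    {t : ℝ} (ht : wassersteinDist α β < t) :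
    ∃ μ : Measure (X × X), μ.map Prod.fst = α ∧ μ.map Prod.snd = β ∧
      ∫ p, dist p.1 p.2 ∂μ ≤ t := by
  obtain ⟨c, ⟨μ, ⟨h1, h2⟩, rfl⟩, hlt⟩ := exists_lt_of_csInf_lt (couplings_nonempty α β) ht
  exact ⟨μ, h1, h2, hlt.le⟩

end Basics

section Glue

variable {X : Type*} [MetricSpace X] [CompactSpace X] [MeasurableSpace X] [BorelSpace X]
  [Nonempty X]

lemma glue_lemma (ρ1 ρ2 ρ3 : Measure X) [IsProbabilityMeasure ρ1] [IsProbabilityMeasure ρ2]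
    [IsProbabilityMeasure ρ3] (μ ν : Measure (X × X))
    (hμ1 : μ.map Prod.fst = ρ1) (hμ2 : μ.map Prod.snd = ρ2)
    (hν1 : ν.map Prod.fst = ρ2) (hν2 : ν.map Prod.snd = ρ3) :
    ∃ ξ : Measure (X × X), ξ.map Prod.fst = ρ1 ∧ ξ.map Prod.snd = ρ3 ∧
      ∫ p, dist p.1 p.2 ∂ξ ≤ ∫ p, dist p.1 p.2 ∂μ + ∫ p, dist p.1 p.2 ∂ν := by
  haveI hμP : IsProbabilityMeasure μ := coupling_prob (β := ρ2) hμ1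
  haveI hνP : IsProbabilityMeasure ν := coupling_prob (β := ρ3) hν1
  set μs : Measure (X × X) := μ.map Prod.swap with hμs_def
  haveI : IsProbabilityMeasure μs := Measure.isProbabilityMeasure_map measurable_swap.aemeasurable
  have hμs_fst : μs.fst = ρ2 := by
    show (μ.map Prod.swap).map Prod.fst = ρ2
    rw [Measure.map_map measurable_fst measurable_swap]
    exact hμ2
  have hμs_snd : μs.snd = ρ1 := by
    show (μ.map Prod.swap).map Prod.snd = ρ1
    rw [Measure.map_map measurable_snd measurable_swap]
    exact hμ1
  have hν_fst : ν.fst = ρ2 := hν1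
  set κ := μs.condKernel with hκdef
  set lk := ν.condKernel with hlkdef
  have hκ : ρ2 ⊗ₘ κ = μs := by rw [← hμs_fst]; exact μs.disintegrate μs.condKernel
  have hlk : ρ2 ⊗ₘ lk = ν := by rw [← hν_fst]; exact ν.disintegrate ν.condKernel
  set m : Measure (X × X × X) := ρ2 ⊗ₘ (κ ×ₖ lk) with hmdef
  haveI : IsProbabilityMeasure m := by infer_instance
  have hg1 : Measurable (fun p : X × X × X => (p.1, p.2.1)) :=
    measurable_fst.prodMk measurable_snd.fst
  have hg2 : Measurable (fun p : X × X × X => (p.1, p.2.2)) :=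
    measurable_fst.prodMk measurable_snd.snd
  have hproj1 : m.map (fun p => (p.1, p.2.1)) = ρ2 ⊗ₘ κ := by
    refine Measure.ext fun s hs => ?_
    rw [Measure.map_apply hg1 hs,
      Measure.compProd_apply (hs.preimage hg1), Measure.compProd_apply hs]
    refine lintegral_congr fun a => ?_
    have : Prod.mk a ⁻¹' ((fun p : X × X × X => (p.1, p.2.1)) ⁻¹' s)
        = Prod.fst ⁻¹' (Prod.mk a ⁻¹' s) := rfl
    rw [this, Kernel.prod_apply, ← Measure.fst_apply (measurable_prodMk_left hs),
      Measure.fst_prod]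
  have hproj2 : m.map (fun p => (p.1, p.2.2)) = ρ2 ⊗ₘ lk := by
    refine Measure.ext fun s hs => ?_
    rw [Measure.map_apply hg2 hs,
      Measure.compProd_apply (hs.preimage hg2), Measure.compProd_apply hs]
    refine lintegral_congr fun a => ?_
    have : Prod.mk a ⁻¹' ((fun p : X × X × X => (p.1, p.2.2)) ⁻¹' s)
        = Prod.snd ⁻¹' (Prod.mk a ⁻¹' s) := rfl
    rw [this, Kernel.prod_apply, ← Measure.snd_apply (measurable_prodMk_left hs),
      Measure.snd_prod]
  refine ⟨m.map Prod.snd, ?_, ?_, ?_⟩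
  · -- first marginal
    rw [Measure.map_map measurable_fst measurable_snd]
    have : (Prod.fst ∘ Prod.snd : X × X × X → X)
        = Prod.snd ∘ (fun p : X × X × X => (p.1, p.2.1)) := rfl
    rw [this, ← Measure.map_map measurable_snd hg1, hproj1, hκ]
    exact hμs_snd
  · rw [Measure.map_map measurable_snd measurable_snd]
    have : (Prod.snd ∘ Prod.snd : X × X × X → X)
        = Prod.snd ∘ (fun p : X × X × X => (p.1, p.2.2)) := rfl
    rw [this, ← Measure.map_map measurable_snd hg2, hproj2, hlk]
    exact hν2
  · -- cost
    rw [integral_map measurable_snd.aemeasurable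
      (measurable_fst.dist measurable_snd).aestronglyMeasurable]
    have hint1 : Integrable (fun p : X × X × X => dist p.2.1 p.1) m :=
      integrable_dist_comp m measurable_snd.fst measurable_fst
    have hint2 : Integrable (fun p : X × X × X => dist p.1 p.2.2) m :=
      integrable_dist_comp m measurable_fst measurable_snd.snd
    have hle : ∫ p, dist (Prod.snd p).1 (Prod.snd p).2 ∂m
        ≤ ∫ p, (dist p.2.1 p.1 + dist p.1 p.2.2) ∂m :=
      integral_mono_ae (integrable_dist_comp m measurable_snd.fst measurable_snd.snd)
        (hint1.add hint2) (ae_of_all _ fun p => dist_triangle _ _ _)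
    rw [integral_add hint1 hint2] at hle
    refine hle.trans (le_of_eq ?_)
    congr 1
    · have e1 : ∫ p, dist p.2.1 p.1 ∂m
          = ∫ q : X × X, dist q.2 q.1 ∂(m.map (fun p : X × X × X => (p.1, p.2.1))) := by
        rw [integral_map hg1.aemeasurable
          (measurable_snd.dist measurable_fst).aestronglyMeasurable]
      rw [e1, hproj1, hκ, hμs_def, integral_map measurable_swap.aemeasurable
        (measurable_snd.dist measurable_fst).aestronglyMeasurable]
      rfl
    · have e2 : ∫ p, dist p.1 p.2.2 ∂m
          = ∫ q : X × X, dist q.1 q.2 ∂(m.map (fun p : X × X × X => (p.1, p.2.2))) := by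
        rw [integral_map hg2.aemeasurable
          (measurable_fst.dist measurable_snd).aestronglyMeasurable]
      rw [e2, hproj2, hlk]

end Glue

section Tri
variable {X : Type*} [MetricSpace X] [CompactSpace X] [MeasurableSpace X] [BorelSpace X]
  [Nonempty X]

lemma wd_triangle (ρ1 ρ2 ρ3 : Measure X) [IsProbabilityMeasure ρ1] [IsProbabilityMeasure ρ2]
    [IsProbabilityMeasure ρ3] :
    wassersteinDist ρ1 ρ3 ≤ wassersteinDist ρ1 ρ2 + wassersteinDist ρ2 ρ3 := by
  refine le_of_forall_pos_le_add fun τ hτ => ?_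
  obtain ⟨μ, hμ1, hμ2, hμc⟩ := exists_coupling_cost_lt ρ1 ρ2
    (lt_add_of_pos_right _ (half_pos hτ))
  obtain ⟨ν, hν1, hν2, hνc⟩ := exists_coupling_cost_lt ρ2 ρ3
    (lt_add_of_pos_right _ (half_pos hτ))
  obtain ⟨ξ, h1, h2, hc⟩ := glue_lemma ρ1 ρ2 ρ3 μ ν hμ1 hμ2 hν1 hν2
  have hle := wd_le_cost ξ h1 h2
  linarith

end Tri

section Trunc

variable {X : Type*} [MetricSpace X] [CompactSpace X] [MeasurableSpace X] [BorelSpace X]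

lemma ball_pos {α : Measure X} (hfull : msupport α = Set.univ) {ε : ℝ} (hε : 0 < ε) (x : X) :
    0 < α (closedBall x ε) := by
  have hx : x ∈ msupport α := by rw [hfull]; trivial
  exact hx _ (closedBall_mem_nhds x hε)

lemma localTrunc_prob {α : Measure X} [IsProbabilityMeasure α] (hfull : msupport α = Set.univ)
    {ε : ℝ} (hε : 0 < ε) (x : X) : IsProbabilityMeasure (localTrunc α ε x) := by
  constructor
  rw [localTrunc, Measure.smul_apply, Measure.restrict_apply MeasurableSet.univ, Set.univ_inter,
    smul_eq_mul, ENNReal.inv_mul_cancel (ball_pos hfull hε x).ne' (measure_ne_top α _)]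

lemma localTrunc_compl {α : Measure X} (ε : ℝ) (x : X) :
    localTrunc α ε x (closedBall x ε)ᶜ = 0 := by
  rw [localTrunc, Measure.smul_apply, Measure.restrict_apply measurableSet_closedBall.compl,
    Set.compl_inter_self, measure_empty, smul_eq_mul, mul_zero]

lemma ball_mass_lower {α : Measure X} [IsProbabilityMeasure α] {D Λ ε : ℝ}
    (hD : Metric.diam (Set.univ : Set X) < D) (hΛ : 0 < Λ) (hε : 0 < ε)
    (hfull : msupport α = Set.univ) (hα : DoublingCond α Λ) (x : X) :
    ENNReal.ofReal (psiLD Λ D ε) ≤ α (closedBall x ε) := by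
  have hD0 : 0 < D := lt_of_le_of_lt Metric.diam_nonneg hD
  by_cases hcase : D ≤ ε
  · have huniv : closedBall x ε = Set.univ :=
      Set.eq_univ_of_forall fun y => mem_closedBall.2
        ((dist_le_diam_univ' y x).trans (le_of_lt (lt_of_lt_of_le hD hcase)))
    rw [huniv, measure_univ]
    calc ENNReal.ofReal (psiLD Λ D ε) ≤ ENNReal.ofReal 1 :=
          ENNReal.ofReal_le_ofReal (min_le_left _ _)
      _ = 1 := ENNReal.ofReal_one
  · push_neg at hcase
    have hx : x ∈ msupport α := by rw [hfull]; trivial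
    have hBD : closedBall x D = Set.univ :=
      Set.eq_univ_of_forall fun y => mem_closedBall.2
        ((dist_le_diam_univ' y x).trans hD.le)
    have h := hα x hx D ε hcase.le hε
    rw [hBD, measure_univ] at h
    have h2 : 1 ≤ ENNReal.ofReal ((D / ε) ^ Λ) * α (closedBall x ε) :=
      (ENNReal.div_le_iff_le_mul (Or.inl (ball_pos hfull hε x).ne')
        (Or.inl (measure_ne_top α _))).mp h
    have hψ : psiLD Λ D ε ≤ ((D / ε : ℝ) ^ Λ)⁻¹ := by
      rw [psiLD]
      refine (min_le_right _ _).trans (le_of_eq ?_)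
      rw [← Real.inv_rpow (by positivity), inv_div]
    refine le_trans (ENNReal.ofReal_le_ofReal hψ) ?_
    rw [ENNReal.ofReal_inv_of_pos (by positivity), ← one_div,
      ENNReal.div_le_iff_le_mul (Or.inl (ENNReal.ofReal_pos.mpr (by positivity)).ne')
        (Or.inl ENNReal.ofReal_ne_top)]
    rwa [mul_comm] at h2
end Trunc

section Transfer

variable {X : Type*} [MetricSpace X] [CompactSpace X] [MeasurableSpace X] [BorelSpace X]

lemma ball_growth {α : Measure X} [IsProbabilityMeasure α] {Λ ε δ : ℝ}
    (hε : 0 < ε) (hδ : 0 ≤ δ)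
    (hfull : msupport α = Set.univ) (hα : DoublingCond α Λ) (x : X) :
    α (closedBall x (ε + δ)) ≤ α (closedBall x ε) * ENNReal.ofReal ((1 + δ / ε) ^ Λ) := by
  have hx : x ∈ msupport α := by rw [hfull]; trivial
  have h := hα x hx (ε + δ) ε (by linarith) hε
  have heq : (ε + δ) / ε = 1 + δ / ε := by field_simp
  rw [heq] at h
  have h2 := (ENNReal.div_le_iff_le_mul (Or.inl (ball_pos hfull hε x).ne')
    (Or.inl (measure_ne_top α _))).mp h
  rwa [mul_comm] at h2

lemma prod_map_fst (μ ν : Measure X) [IsFiniteMeasure μ] [IsFiniteMeasure ν] :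
    (μ.prod ν).map Prod.fst = ν Set.univ • μ := by
  refine Measure.ext fun s hs => ?_
  rw [Measure.map_apply measurable_fst hs, Measure.smul_apply]
  have hpre : (Prod.fst : X × X → X) ⁻¹' s = s ×ˢ (Set.univ : Set X) := by
    ext p; simp
  rw [hpre, Measure.prod_prod, smul_eq_mul, mul_comm]

lemma prod_map_snd (μ ν : Measure X) [IsFiniteMeasure μ] [IsFiniteMeasure ν] :
    (μ.prod ν).map Prod.snd = μ Set.univ • ν := by
  refine Measure.ext fun s hs => ?_
  rw [Measure.map_apply measurable_snd hs, Measure.smul_apply]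
  have hpre : (Prod.snd : X × X → X) ⁻¹' s = (Set.univ : Set X) ×ˢ s := by
    ext p; simp
  rw [hpre, Measure.prod_prod, smul_eq_mul]

lemma dist_le_two_eps {ε : ℝ} {x p q : X} (hp : p ∈ closedBall x ε) (hq : q ∈ closedBall x ε) :
    dist p q ≤ 2 * ε := by
  have h1 : dist p x ≤ ε := mem_closedBall.1 hp
  have h2 : dist q x ≤ ε := mem_closedBall.1 hq
  have := dist_triangle p x q
  rw [dist_comm x q] at this
  linarith

lemma trivial_transfer {α β : Measure X} [IsProbabilityMeasure α] [IsProbabilityMeasure β]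
    {ε : ℝ} (hε : 0 < ε) (hαfull : msupport α = Set.univ) (hβfull : msupport β = Set.univ)
    (x : X) :
    wassersteinDist (localTrunc α ε x) (localTrunc β ε x) ≤ 2 * ε := by
  haveI := localTrunc_prob hαfull hε x
  haveI := localTrunc_prob hβfull hε x
  set tA := localTrunc α ε x
  set tB := localTrunc β ε x
  refine (wd_le_cost (tA.prod tB) Measure.fst_prod Measure.snd_prod).trans ?_
  set B := closedBall x ε with hB
  have hzero : (tA.prod tB) ((B ×ˢ B)ᶜ) = 0 := by
    refine le_antisymm ?_ (zero_le)
    refine le_trans (measure_mono (fun p hp => ?_)) (le_trans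
      (measure_union_le (Bᶜ ×ˢ (Set.univ : Set X)) ((Set.univ : Set X) ×ˢ Bᶜ)) ?_)
    · by_cases h1 : p.1 ∈ B
      · right; exact ⟨trivial, fun h2 => hp ⟨h1, h2⟩⟩
      · left; exact ⟨h1, trivial⟩
    · rw [Measure.prod_prod, Measure.prod_prod, localTrunc_compl, localTrunc_compl]
      simp
  have hae : ∀ᵐ p ∂(tA.prod tB), dist p.1 p.2 ≤ 2 * ε := by
    rw [ae_iff]
    refine measure_mono_null (fun p hp => ?_) hzero
    simp only [Set.mem_setOf_eq, not_le] at hp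
    intro hmem
    exact absurd (dist_le_two_eps hmem.1 hmem.2) (not_le.2 hp)
  calc ∫ p, dist p.1 p.2 ∂(tA.prod tB) ≤ ∫ _p, 2 * ε ∂(tA.prod tB) :=
        integral_mono_ae (integrable_dist_fn _) (integrable_const _) hae
    _ = 2 * ε := by simp

lemma transfer_bound (D Λ ε δ : ℝ) (hD : Metric.diam (Set.univ : Set X) < D)
    (hΛ : 0 < Λ) (hε : 0 < ε) (hδ : 0 < δ)
    (α β : Measure X) [IsProbabilityMeasure α] [IsProbabilityMeasure β]
    (hαfull : msupport α = Set.univ) (hβfull : msupport β = Set.univ)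
    (hα : DoublingCond α Λ) (hβ : DoublingCond β Λ) (x : X)
    (μc : Measure (X × X)) (h1 : μc.map Prod.fst = α) (h2 : μc.map Prod.snd = β)
    (hcost : ∫ p, dist p.1 p.2 ∂μc ≤ δ * δ) :
    wassersteinDist (localTrunc α ε x) (localTrunc β ε x)
      ≤ δ * (δ + 2 * ε) / psiLD Λ D ε + 2 * ε * ((1 + δ / ε) ^ Λ - 1) := by
  haveI : IsProbabilityMeasure μc := coupling_prob (β := β) h1
  have hD0 : 0 < D := lt_of_le_of_lt Metric.diam_nonneg hD
  have hψpos : 0 < psiLD Λ D ε :=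
    lt_min one_pos (Real.rpow_pos_of_pos (div_pos hε hD0) Λ)
  set ψ := psiLD Λ D ε with hψ
  set K := (1 + δ / ε) ^ Λ - 1 with hKdef
  have hK0 : 0 ≤ K := by
    rw [hKdef, sub_nonneg]
    exact Real.one_le_rpow (le_add_of_nonneg_right (by positivity)) hΛ.le
  set B := closedBall x ε with hB
  have hBm : MeasurableSet B := measurableSet_closedBall
  set a := α B with ha
  set b := β B with hb
  have ha0 : a ≠ 0 := (ball_pos hαfull hε x).ne'
  have hb0 : b ≠ 0 := (ball_pos hβfull hε x).ne'
  have ha_top : a ≠ ⊤ := measure_ne_top α _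
  have hb_top : b ≠ ⊤ := measure_ne_top β _
  have ha1 : a ≤ 1 := prob_le_one
  have hb1 : b ≤ 1 := prob_le_one
  have hmax0 : max a b ≠ 0 := fun h => ha0 (le_antisymm (h ▸ le_max_left a b) (zero_le))
  have hmax_top : max a b ≠ ⊤ := fun h => ha_top (by
    rcases max_choice a b with hc | hc
    · rw [← hc]; exact h
    · exact absurd (hc ▸ h) hb_top)
  set c := (max a b)⁻¹ with hc
  have hc_top : c ≠ ⊤ := ENNReal.inv_ne_top.2 hmax0
  have hcmax : c * max a b = 1 := ENNReal.inv_mul_cancel hmax0 hmax_top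
  haveI instProbA : IsProbabilityMeasure (localTrunc α ε x) := localTrunc_prob hαfull hε x
  haveI instProbB : IsProbabilityMeasure (localTrunc β ε x) := localTrunc_prob hβfull hε x
  set tA := localTrunc α ε x with htA
  set tB := localTrunc β ε x with htB
  set A0 := μc.restrict (B ×ˢ B) with hA0
  set m := μc (B ×ˢ B) with hm
  have hma : m ≤ a := by
    rw [hm, ha, ← h1, Measure.map_apply measurable_fst hBm]
    exact measure_mono (fun p hp => hp.1)
  have hmb : m ≤ b := by
    rw [hm, hb, ← h2, Measure.map_apply measurable_snd hBm]
    exact measure_mono (fun p hp => hp.2)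
  -- domination of marginals of A0
  have hAf_le : ∀ s : Set X, MeasurableSet s →
      (A0.map Prod.fst) s ≤ (α.restrict B) s := by
    intro s hs
    rw [Measure.map_apply measurable_fst hs, hA0,
      Measure.restrict_apply (hs.preimage measurable_fst), Measure.restrict_apply hs,
      ← h1, Measure.map_apply measurable_fst (hs.inter hBm)]
    exact measure_mono (fun p hp => ⟨hp.1, hp.2.1⟩)
  have hAs_le : ∀ s : Set X, MeasurableSet s →
      (A0.map Prod.snd) s ≤ (β.restrict B) s := by
    intro s hs
    rw [Measure.map_apply measurable_snd hs, hA0,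
      Measure.restrict_apply (hs.preimage measurable_snd), Measure.restrict_apply hs,
      ← h2, Measure.map_apply measurable_snd (hs.inter hBm)]
    exact measure_mono (fun p hp => ⟨hp.1, hp.2.2⟩)
  have hle1 : c • (A0.map Prod.fst) ≤ tA := by
    rw [Measure.le_iff]
    intro s hs
    rw [htA, localTrunc, Measure.smul_apply, Measure.smul_apply, smul_eq_mul, smul_eq_mul]
    exact mul_le_mul' (ENNReal.inv_le_inv.mpr (le_max_left a b)) (hAf_le s hs)
  have hle2 : c • (A0.map Prod.snd) ≤ tB := by
    rw [Measure.le_iff]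
    intro s hs
    rw [htB, localTrunc, Measure.smul_apply, Measure.smul_apply, smul_eq_mul, smul_eq_mul]
    exact mul_le_mul' (ENNReal.inv_le_inv.mpr (le_max_right a b)) (hAs_le s hs)
  have hAf_univ : (A0.map Prod.fst) Set.univ = m := by
    rw [Measure.map_apply measurable_fst MeasurableSet.univ, Set.preimage_univ, hA0,
      Measure.restrict_apply MeasurableSet.univ, Set.univ_inter]
  have hAs_univ : (A0.map Prod.snd) Set.univ = m := by
    rw [Measure.map_apply measurable_snd MeasurableSet.univ, Set.preimage_univ, hA0,
      Measure.restrict_apply MeasurableSet.univ, Set.univ_inter]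
  haveI hfinAf : IsFiniteMeasure (c • (A0.map Prod.fst)) := by
    constructor
    exact lt_of_le_of_lt ((Measure.le_iff.mp hle1) _ MeasurableSet.univ)
      (by rw [measure_univ]; exact ENNReal.one_lt_top)
  haveI hfinAs : IsFiniteMeasure (c • (A0.map Prod.snd)) := by
    constructor
    exact lt_of_le_of_lt ((Measure.le_iff.mp hle2) _ MeasurableSet.univ)
      (by rw [measure_univ]; exact ENNReal.one_lt_top)
  set res1 := tA - c • (A0.map Prod.fst) with hres1
  set res2 := tB - c • (A0.map Prod.snd) with hres2
  set r := 1 - c * m with hr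
  have hr_le1 : r ≤ 1 := tsub_le_self
  have hr_top : r ≠ ⊤ := fun h => ENNReal.one_lt_top.ne' (top_le_iff.mp (h ▸ hr_le1) ▸ rfl)
  have hres1_univ : res1 Set.univ = r := by
    rw [hres1, Measure.sub_apply MeasurableSet.univ hle1, measure_univ, Measure.smul_apply,
      hAf_univ, smul_eq_mul, hr]
  have hres2_univ : res2 Set.univ = r := by
    rw [hres2, Measure.sub_apply MeasurableSet.univ hle2, measure_univ, Measure.smul_apply,
      hAs_univ, smul_eq_mul, hr]
  haveI hres1fin : IsFiniteMeasure res1 :=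
    ⟨by rw [hres1_univ]; exact lt_of_le_of_lt hr_le1 ENNReal.one_lt_top⟩
  haveI hres2fin : IsFiniteMeasure res2 :=
    ⟨by rw [hres2_univ]; exact lt_of_le_of_lt hr_le1 ENNReal.one_lt_top⟩
  set nu := r⁻¹ • (res1.prod res2) with hnu
  set π := c • A0 + nu with hπ
  have hsum1 : c • (A0.map Prod.fst) + res1 = tA := by
    rw [hres1, add_comm]; exact Measure.sub_add_cancel_of_le hle1
  have hsum2 : c • (A0.map Prod.snd) + res2 = tB := by
    rw [hres2, add_comm]; exact Measure.sub_add_cancel_of_le hle2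
  have hres_scale : ∀ (resx : Measure X), resx Set.univ = r → r⁻¹ • (r • resx) = resx := by
    intro resx hx
    by_cases hr0 : r = 0
    · have : resx = 0 := by
        refine Measure.measure_univ_eq_zero.mp ?_
        rw [hx, hr0]
      rw [this]; simp
    · rw [smul_smul, ENNReal.inv_mul_cancel hr0 hr_top, one_smul]
  have hπ1 : π.map Prod.fst = tA := by
    rw [hπ, Measure.map_add _ _ measurable_fst, hnu, Measure.map_smul, Measure.map_smul,
      prod_map_fst, hres2_univ, hres_scale res1 hres1_univ, hsum1]
  have hπ2 : π.map Prod.snd = tB := by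
    rw [hπ, Measure.map_add _ _ measurable_snd, hnu, Measure.map_smul, Measure.map_smul,
      prod_map_snd, hres1_univ, hres_scale res2 hres2_univ, hsum2]
  refine le_trans (wd_le_cost π hπ1 hπ2) ?_
  haveI hfinA0 : IsFiniteMeasure A0 := by
    constructor
    rw [hA0, Measure.restrict_apply MeasurableSet.univ, Set.univ_inter]
    exact measure_lt_top μc _
  haveI hfincA0 : IsFiniteMeasure (c • A0) := by
    constructor
    rw [Measure.smul_apply, smul_eq_mul]
    exact ENNReal.mul_lt_top hc_top.lt_top (measure_lt_top A0 _)
  have hnuuniv : nu Set.univ ≤ r := by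
    rw [hnu, Measure.smul_apply, ← Set.univ_prod_univ, Measure.prod_prod, hres1_univ,
      hres2_univ, smul_eq_mul]
    by_cases hr0 : r = 0
    · rw [hr0]; simp
    · rw [← mul_assoc, ENNReal.inv_mul_cancel hr0 hr_top, one_mul]
  haveI hnufin : IsFiniteMeasure nu :=
    ⟨lt_of_le_of_lt hnuuniv (lt_of_le_of_lt hr_le1 ENNReal.one_lt_top)⟩
  -- split the cost integral
  rw [hπ, integral_add_measure (integrable_dist_fn _) (integrable_dist_fn _),
    integral_smul_measure, smul_eq_mul]
  have hA0cost : ∫ p, dist p.1 p.2 ∂A0 ≤ δ * δ :=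
    le_trans (integral_mono_measure (hA0 ▸ Measure.restrict_le_self)
      (ae_of_all _ fun _ => dist_nonneg) (integrable_dist_fn μc)) hcost
  have hA0nonneg : 0 ≤ ∫ p, dist p.1 p.2 ∂A0 := cost_nonneg _
  have hcreal : c.toReal ≤ 1 / ψ := by
    have hψa : ENNReal.ofReal ψ ≤ max a b :=
      le_trans (ball_mass_lower hD hΛ hε hαfull hα x) (le_max_left a b)
    have hcle : c ≤ (ENNReal.ofReal ψ)⁻¹ := ENNReal.inv_le_inv.mpr hψa
    refine le_trans (ENNReal.toReal_mono
      (ENNReal.inv_ne_top.2 (ENNReal.ofReal_pos.mpr hψpos).ne') hcle) (le_of_eq ?_)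
    rw [ENNReal.toReal_inv, ENNReal.toReal_ofReal hψpos.le, one_div]
  have hcreal0 : 0 ≤ c.toReal := ENNReal.toReal_nonneg
  -- the residual product lives on B ×ˢ B
  have hres1B : res1 Bᶜ = 0 := by
    refine le_antisymm (le_trans ((Measure.le_iff.mp Measure.sub_le) _ hBm.compl) ?_) (zero_le)
    rw [htA, localTrunc_compl]
  have hres2B : res2 Bᶜ = 0 := by
    refine le_antisymm (le_trans ((Measure.le_iff.mp Measure.sub_le) _ hBm.compl) ?_) (zero_le)
    rw [htB, localTrunc_compl]
  have hnuzero : nu ((B ×ˢ B)ᶜ) = 0 := by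
    refine le_antisymm ?_ (zero_le)
    rw [hnu, Measure.smul_apply, smul_eq_mul]
    have hpz : (res1.prod res2) ((B ×ˢ B)ᶜ) = 0 := by
      refine le_antisymm (le_trans (measure_mono fun p hp => ?_)
        (le_trans (measure_union_le (Bᶜ ×ˢ (Set.univ : Set X))
          ((Set.univ : Set X) ×ˢ Bᶜ)) ?_)) (zero_le)
      · by_cases h1 : p.1 ∈ B
        · right; exact ⟨trivial, fun h2 => hp ⟨h1, h2⟩⟩
        · left; exact ⟨h1, trivial⟩
      · rw [Measure.prod_prod, Measure.prod_prod, hres1B, hres2B]; simp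
    rw [hpz, mul_zero]
  have hnucost : ∫ p, dist p.1 p.2 ∂nu ≤ 2 * ε * r.toReal := by
    have hae : ∀ᵐ p ∂nu, dist p.1 p.2 ≤ 2 * ε := by
      rw [ae_iff]
      refine measure_mono_null (fun p hp => ?_) hnuzero
      simp only [Set.mem_setOf_eq, not_le] at hp
      intro hmem
      exact absurd (dist_le_two_eps hmem.1 hmem.2) (not_le.2 hp)
    have hrr : (nu Set.univ).toReal ≤ r.toReal := ENNReal.toReal_mono hr_top hnuuniv
    calc ∫ p, dist p.1 p.2 ∂nu ≤ ∫ _p, 2 * ε ∂nu :=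
          integral_mono_ae (integrable_dist_fn _) (integrable_const _) hae
      _ = (nu Set.univ).toReal * (2 * ε) := by rw [integral_const, smul_eq_mul, measureReal_def]
      _ ≤ 2 * ε * r.toReal := by nlinarith [ENNReal.toReal_nonneg (a := nu Set.univ)]
  -- Markov inequality
  set S := {p : X × X | δ ≤ dist p.1 p.2} with hSdef
  have hSmeas : μc S ≤ ENNReal.ofReal δ := by
    have hmark := mul_meas_ge_le_integral_of_nonneg
      (ae_of_all μc fun p => dist_nonneg) (integrable_dist_fn μc) δ
    have ht : (μc S).toReal ≤ δ :=
      le_of_mul_le_mul_left (le_trans hmark hcost) hδ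
    exact (ENNReal.le_ofReal_iff_toReal_le (measure_ne_top μc S) hδ.le).2 ht
  set Bd := closedBall x (ε + δ) with hBd
  have hBsub : B ⊆ Bd := closedBall_subset_closedBall (by linarith)
  have hofK : ENNReal.ofReal ((1 + δ / ε) ^ Λ) = ENNReal.ofReal K + 1 := by
    rw [← ENNReal.ofReal_one, ← ENNReal.ofReal_add hK0 zero_le_one]
    congr 1
    rw [hKdef]; ring
  have hannα : α (Bd \ B) ≤ a * ENNReal.ofReal K := by
    rw [measure_diff hBsub hBm.nullMeasurableSet (measure_ne_top α B)]
    refine tsub_le_iff_right.2 ?_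
    refine le_trans (ball_growth hε hδ.le hαfull hα x) (le_of_eq ?_)
    rw [hofK, mul_add, mul_one]
  have hannβ : β (Bd \ B) ≤ b * ENNReal.ofReal K := by
    rw [measure_diff hBsub hBm.nullMeasurableSet (measure_ne_top β B)]
    refine tsub_le_iff_right.2 ?_
    refine le_trans (ball_growth hε hδ.le hβfull hβ x) (le_of_eq ?_)
    rw [hofK, mul_add, mul_one]
  set e1 := μc (B ×ˢ Bᶜ) with he1def
  set e2 := μc (Bᶜ ×ˢ B) with he2def
  have ha_dec : a = m + e1 := by
    rw [ha, ← h1, Measure.map_apply measurable_fst hBm]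
    have hpre : (Prod.fst : X × X → X) ⁻¹' B = B ×ˢ (Set.univ : Set X) := by ext p; simp
    rw [hpre, ← Set.union_compl_self B, Set.prod_union,
      measure_union ?disj (hBm.prod hBm.compl)]
    case disj =>
      rw [Set.disjoint_iff_inter_eq_empty, Set.prod_inter_prod]; simp
  have hb_dec : b = m + e2 := by
    rw [hb, ← h2, Measure.map_apply measurable_snd hBm]
    have hpre : (Prod.snd : X × X → X) ⁻¹' B = (Set.univ : Set X) ×ˢ B := by ext p; simp
    rw [hpre, ← Set.union_compl_self B, Set.union_prod,
      measure_union ?disj2 (hBm.compl.prod hBm)]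
    case disj2 =>
      rw [Set.disjoint_iff_inter_eq_empty, Set.prod_inter_prod]; simp
  have he1 : e1 ≤ ENNReal.ofReal δ + b * ENNReal.ofReal K := by
    have hincl : B ×ˢ Bᶜ ⊆ S ∪ (Set.univ : Set X) ×ˢ (Bd \ B) := by
      rintro ⟨p, q⟩ ⟨hp, hq⟩
      by_cases hle : δ ≤ dist p q
      · exact Or.inl hle
      · push_neg at hle
        refine Or.inr ⟨trivial, ?_, hq⟩
        have h3 := dist_triangle q p x
        rw [dist_comm q p] at h3
        have hp' : dist p x ≤ ε := mem_closedBall.1 hp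
        exact mem_closedBall.2 (by linarith)
    refine le_trans (measure_mono hincl) (le_trans (measure_union_le _ _) ?_)
    have hμann : μc ((Set.univ : Set X) ×ˢ (Bd \ B)) = β (Bd \ B) := by
      have hpre : (Prod.snd : X × X → X) ⁻¹' (Bd \ B) = (Set.univ : Set X) ×ˢ (Bd \ B) := by
        ext p; simp
      rw [← h2, Measure.map_apply measurable_snd (measurableSet_closedBall.diff hBm), hpre]
    rw [hμann]
    exact add_le_add hSmeas hannβ
  have he2 : e2 ≤ ENNReal.ofReal δ + a * ENNReal.ofReal K := by
    have hincl : Bᶜ ×ˢ B ⊆ S ∪ (Bd \ B) ×ˢ (Set.univ : Set X) := by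
      rintro ⟨p, q⟩ ⟨hp, hq⟩
      by_cases hle : δ ≤ dist p q
      · exact Or.inl hle
      · push_neg at hle
        refine Or.inr ⟨⟨?_, hp⟩, trivial⟩
        have h3 := dist_triangle p q x
        have hq' : dist q x ≤ ε := mem_closedBall.1 hq
        exact mem_closedBall.2 (by linarith)
    refine le_trans (measure_mono hincl) (le_trans (measure_union_le _ _) ?_)
    have hμann : μc ((Bd \ B) ×ˢ (Set.univ : Set X)) = α (Bd \ B) := by
      have hpre : (Prod.fst : X × X → X) ⁻¹' (Bd \ B) = (Bd \ B) ×ˢ (Set.univ : Set X) := by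
        ext p; simp
      rw [← h1, Measure.map_apply measurable_fst (measurableSet_closedBall.diff hBm), hpre]
    rw [hμann]
    exact add_le_add hSmeas hannα
  have hr_bound : r ≤ c * ENNReal.ofReal δ + ENNReal.ofReal K := by
    refine tsub_le_iff_right.2 ?_
    have hmax_dec : max a b = m + max e1 e2 := by
      rw [ha_dec, hb_dec]; exact max_add_add_left m e1 e2
    have hE : max e1 e2 ≤ ENNReal.ofReal δ + (max a b) * ENNReal.ofReal K := by
      refine max_le (he1.trans ?_) (he2.trans ?_)
      · exact add_le_add_right (mul_le_mul_left (le_max_right a b) _) _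
      · exact add_le_add_right (mul_le_mul_left (le_max_left a b) _) _
    calc (1 : ENNReal) = c * max a b := hcmax.symm
      _ = c * m + c * max e1 e2 := by rw [hmax_dec, mul_add]
      _ ≤ c * m + c * (ENNReal.ofReal δ + max a b * ENNReal.ofReal K) :=
          add_le_add_right (mul_le_mul_right hE c) _
      _ = c * ENNReal.ofReal δ + ENNReal.ofReal K + c * m := by
          rw [mul_add c, ← mul_assoc c (max a b), hcmax, one_mul]; ring
  have hr_real : r.toReal ≤ c.toReal * δ + K := by
    have hne1 : c * ENNReal.ofReal δ ≠ ⊤ := ENNReal.mul_ne_top hc_top ENNReal.ofReal_ne_top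
    refine le_trans (ENNReal.toReal_mono
      (by exact ENNReal.add_ne_top.2 ⟨hne1, ENNReal.ofReal_ne_top⟩) hr_bound) (le_of_eq ?_)
    rw [ENNReal.toReal_add hne1 ENNReal.ofReal_ne_top, ENNReal.toReal_mul,
      ENNReal.toReal_ofReal hδ.le, ENNReal.toReal_ofReal hK0]
  -- final arithmetic
  have hfirst : c.toReal * ∫ p, dist p.1 p.2 ∂A0 ≤ 1 / ψ * (δ * δ) :=
    mul_le_mul hcreal hA0cost hA0nonneg (by positivity)
  have hrK : r.toReal ≤ 1 / ψ * δ + K := by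
    have hmm := mul_le_mul_of_nonneg_right hcreal hδ.le
    exact hr_real.trans (by linarith [hmm])
  have hsecond : 2 * ε * r.toReal ≤ 2 * ε * (1 / ψ * δ + K) :=
    mul_le_mul_of_nonneg_left hrK (by positivity)
  have htarget : δ * (δ + 2 * ε) / ψ + 2 * ε * K
      = 1 / ψ * (δ * δ) + 2 * ε * (1 / ψ * δ + K) := by
    field_simp
    ring
  rw [htarget]
  linarith [hnucost, hfirst, hsecond]

end Transfer

/-- **Stability of the Wasserstein transform metric `d_α^{(ε)}`** (Theorem 4 of the paper).
For a compact metric space with diam < D and fully supported Λ-doubling Borel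
probability measures α, β:
`|d_α^{(ε)}(x,x') − d_β^{(ε)}(x,x')| ≤ 2(1+2ε) Φ_{Λ,D,ε}(√(d_{W,1}(α,β)))` for all x, x'. -/
theorem stability_of_wasserstein_transform_metric
    {X : Type*} [MetricSpace X] [CompactSpace X] [MeasurableSpace X] [BorelSpace X]
    (D Λ ε : ℝ) (hD : Metric.diam (Set.univ : Set X) < D) (hΛ : 0 < Λ) (hε : 0 < ε)
    (α β : Measure X) [IsProbabilityMeasure α] [IsProbabilityMeasure β]
    (hαfull : msupport α = Set.univ) (hβfull : msupport β = Set.univ)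
    (hα : DoublingCond α Λ) (hβ : DoublingCond β Λ) :
    ∀ x x' : X,
      |wassersteinDist (localTrunc α ε x) (localTrunc α ε x') -
        wassersteinDist (localTrunc β ε x) (localTrunc β ε x')| ≤
      2 * (1 + 2 * ε) * PhiLDE Λ D ε (Real.sqrt (wassersteinDist α β)) := by
  haveI : Nonempty X := by
    by_contra h
    rw [not_nonempty_iff] at h
    have h1 : α (Set.univ : Set X) = 1 := measure_univ
    rw [Set.univ_eq_empty_iff.2 h, measure_empty] at h1
    exact zero_ne_one h1
  intro x x'
  have hD0 : 0 < D := lt_of_le_of_lt Metric.diam_nonneg hD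
  have hψpos : 0 < psiLD Λ D ε := lt_min one_pos (Real.rpow_pos_of_pos (div_pos hε hD0) Λ)
  set ψ := psiLD Λ D ε with hψdef
  set W := wassersteinDist α β with hW
  have hW0 : 0 ≤ W := wd_nonneg α β
  set η := Real.sqrt W with hη
  have hη0 : 0 ≤ η := Real.sqrt_nonneg W
  have hηsq : η * η = W := Real.mul_self_sqrt hW0
  have hK0 : 0 ≤ (1 + η / ε) ^ Λ - 1 := by
    rw [sub_nonneg]
    exact Real.one_le_rpow (le_add_of_nonneg_right (by positivity)) hΛ.le
  have hPhi : PhiLDE Λ D ε η = η / ψ + ((1 + η / ε) ^ Λ - 1) := rfl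
  set M := (1 + 2 * ε) * PhiLDE Λ D ε η with hM
  have hψ1 : ψ ≤ 1 := min_le_left _ _
  have hηψ : η ≤ η / ψ := by
    rw [le_div_iff₀ hψpos]
    nlinarith
  have key : ∀ y : X,
      wassersteinDist (localTrunc α ε y) (localTrunc β ε y) ≤ M ∧
      wassersteinDist (localTrunc β ε y) (localTrunc α ε y) ≤ M := by
    intro y
    by_cases hcase : 1 ≤ η
    · have h2ε : 2 * ε ≤ M := by
        have hPhi1 : (1 : ℝ) ≤ PhiLDE Λ D ε η := by rw [hPhi]; linarith
        rw [hM]; nlinarith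
      exact ⟨(trivial_transfer hε hαfull hβfull y).trans h2ε,
        (trivial_transfer hε hβfull hαfull y).trans h2ε⟩
    · push_neg at hcase
      have hstep : ∀ δ : ℝ, δ ∈ Set.Ioi η →
          wassersteinDist (localTrunc α ε y) (localTrunc β ε y) ≤
            δ * (δ + 2 * ε) / ψ + 2 * ε * ((1 + δ / ε) ^ Λ - 1) ∧
          wassersteinDist (localTrunc β ε y) (localTrunc α ε y) ≤
            δ * (δ + 2 * ε) / ψ + 2 * ε * ((1 + δ / ε) ^ Λ - 1) := by
        intro δ hδmem
        have hδ : η < δ := hδmem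
        have hδ0 : 0 < δ := lt_of_le_of_lt hη0 hδ
        have hWlt : wassersteinDist α β < δ * δ := by
          rw [← hW, ← hηsq]
          nlinarith
        obtain ⟨μc, h1, h2, hc⟩ := exists_coupling_cost_lt α β hWlt
        haveI : IsProbabilityMeasure μc := coupling_prob (β := β) h1
        have hs1 : (μc.map Prod.swap).map Prod.fst = β := by
          rw [Measure.map_map measurable_fst measurable_swap]
          exact h2
        have hs2 : (μc.map Prod.swap).map Prod.snd = α := by
          rw [Measure.map_map measurable_snd measurable_swap]
          exact h1
        have hcs : ∫ p, dist p.1 p.2 ∂(μc.map Prod.swap) ≤ δ * δ := by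
          rw [integral_map measurable_swap.aemeasurable
            (measurable_fst.dist measurable_snd).aestronglyMeasurable]
          have heq : ∫ p, dist (Prod.swap p).1 (Prod.swap p).2 ∂μc
              = ∫ p, dist p.1 p.2 ∂μc :=
            integral_congr_ae (ae_of_all _ fun p => dist_comm _ _)
          rw [heq]
          exact hc
        exact ⟨transfer_bound D Λ ε δ hD hΛ hε hδ0 α β hαfull hβfull hα hβ y μc h1 h2 hc,
          transfer_bound D Λ ε δ hD hΛ hε hδ0 β α hβfull hαfull hβ hα y
            (μc.map Prod.swap) hs1 hs2 hcs⟩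
      have hcont : ContinuousAt
          (fun δ : ℝ => δ * (δ + 2 * ε) / ψ + 2 * ε * ((1 + δ / ε) ^ Λ - 1)) η := by
        have h1c : ContinuousAt (fun δ : ℝ => δ * (δ + 2 * ε) / ψ) η :=
          (continuousAt_id.mul (continuousAt_id.add continuousAt_const)).div_const _
        have hbase : ContinuousAt (fun δ : ℝ => 1 + δ / ε) η :=
          continuousAt_const.add (continuousAt_id.div_const _)
        have hcomp : ContinuousAt (fun δ : ℝ => (1 + δ / ε) ^ Λ) η :=
          hbase.rpow_const (Or.inr hΛ.le)
        exact h1c.add (continuousAt_const.mul (hcomp.sub continuousAt_const))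
      have hlim1 : wassersteinDist (localTrunc α ε y) (localTrunc β ε y) ≤
          η * (η + 2 * ε) / ψ + 2 * ε * ((1 + η / ε) ^ Λ - 1) :=
        ge_of_tendsto (hcont.tendsto.mono_left nhdsWithin_le_nhds)
          (eventually_nhdsWithin_of_forall fun δ hδ => (hstep δ hδ).1)
      have hlim2 : wassersteinDist (localTrunc β ε y) (localTrunc α ε y) ≤
          η * (η + 2 * ε) / ψ + 2 * ε * ((1 + η / ε) ^ Λ - 1) :=
        ge_of_tendsto (hcont.tendsto.mono_left nhdsWithin_le_nhds)
          (eventually_nhdsWithin_of_forall fun δ hδ => (hstep δ hδ).2)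
      have hTM : η * (η + 2 * ε) / ψ + 2 * ε * ((1 + η / ε) ^ Λ - 1) ≤ M := by
        rw [hM, hPhi]
        have hnum : η * (η + 2 * ε) ≤ (1 + 2 * ε) * η := by nlinarith
        have hd1 : η * (η + 2 * ε) / ψ ≤ (1 + 2 * ε) * (η / ψ) := by
          rw [← mul_div_assoc]
          exact (div_le_div_iff_of_pos_right hψpos).mpr hnum
        have hd2 : 2 * ε * ((1 + η / ε) ^ Λ - 1)
            ≤ (1 + 2 * ε) * ((1 + η / ε) ^ Λ - 1) :=
          mul_le_mul_of_nonneg_right (by linarith) hK0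
        linarith
      exact ⟨hlim1.trans hTM, hlim2.trans hTM⟩
  haveI iAx : IsProbabilityMeasure (localTrunc α ε x) := localTrunc_prob hαfull hε x
  haveI iAx' : IsProbabilityMeasure (localTrunc α ε x') := localTrunc_prob hαfull hε x'
  haveI iBx : IsProbabilityMeasure (localTrunc β ε x) := localTrunc_prob hβfull hε x
  haveI iBx' : IsProbabilityMeasure (localTrunc β ε x') := localTrunc_prob hβfull hε x'
  have tri1 : wassersteinDist (localTrunc α ε x) (localTrunc α ε x') ≤
      M + (wassersteinDist (localTrunc β ε x) (localTrunc β ε x') + M) := by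
    refine le_trans (wd_triangle _ (localTrunc β ε x) _) ?_
    refine add_le_add (key x).1 ?_
    refine le_trans (wd_triangle _ (localTrunc β ε x') _) ?_
    exact add_le_add le_rfl (key x').2
  have tri2 : wassersteinDist (localTrunc β ε x) (localTrunc β ε x') ≤
      M + (wassersteinDist (localTrunc α ε x) (localTrunc α ε x') + M) := by
    refine le_trans (wd_triangle _ (localTrunc α ε x) _) ?_
    refine add_le_add (key x).2 ?_
    refine le_trans (wd_triangle _ (localTrunc α ε x') _) ?_
    exact add_le_add le_rfl (key x').1
  have hRHS : 2 * (1 + 2 * ε) * PhiLDE Λ D ε η = 2 * M := by rw [hM]; ring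
  rw [hRHS, abs_le]
  constructor <;> linarith
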